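/- Let n ≥ 3 and let λ_1,…,λ_n be reals with λ_1 ≥ ⋯ ≥ λ_{n−1} > 0 > λ_n, each λ_i ∉ ℤ_{≥0}, and λ := λ_1+⋯+λ_n < 0. With d defined as below: for 0 ≤ k ≤ ⌈λ_{n−1}⌉ one has d(k) = C(k+n−2, n−2), and for every k > ⌈λ_{n−1}⌉ one has |d(k)| < C(k+n−2, n−2). Equivalently, the definite multiplicity spaces in M_{λ_1} ⊗ ⋯ ⊗ M_{λ_n} are exactly the positive definite spaces of levels 0 through ⌈λ_{n−1}⌉. -/

import Mathlib

open scoped Classical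

/-- `fsig λ k` is the coefficient of `e^{λ-2k}` in the signature character of the
Verma module `M_λ` evaluated at `s = -1`. -/
noncomputable def fsig (lam : ℝ) (k : ℤ) : ℤ :=
  if k < 0 then 0
  else if lam < 0 then (-1) ^ k.toNat
  else if k ≤ ⌊lam⌋ then 1
  else (-1) ^ (k + ⌈lam⌉).toNat

/-- `convSig n lam k = Σ_{k₁+⋯+k_n = k} ∏_i f_{λ_i}(k_i)`, the coefficient of
`e^{λ−2k}` in the product of signature characters at `s = −1`. -/
noncomputable def convSig (n : ℕ) (lam : Fin n → ℝ) (k : ℕ) : ℤ :=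
  ∑ x ∈ Finset.Nat.antidiagonalTuple n k, ∏ i, fsig (lam i) (x i)

section AuxStmt17

noncomputable def Esig (m : ℕ) (mu : Fin m → ℝ) (k : ℕ) : ℤ :=
  ∑ y ∈ Finset.Nat.antidiagonalTuple m k, ∏ i, fsig (mu i) (y i)

lemma fsig_of_neg {lam : ℝ} (h : lam < 0) {k : ℤ} (hk : 0 ≤ k) :
    fsig lam k = (-1) ^ k.toNat := by
  simp [fsig, not_lt.2 hk, h]

lemma ceil_eq_floor_add_one {lam : ℝ} (h0 : 0 < lam) (hni : ∀ z : ℕ, lam ≠ z) :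
    ⌈lam⌉ = ⌊lam⌋ + 1 := by
  rcases eq_or_lt_of_le (Int.ceil_le_floor_add_one lam) with h | h
  · exact h
  · exfalso
    have h1 : ⌈lam⌉ ≤ ⌊lam⌋ := by omega
    have h2 : lam ≤ (⌊lam⌋ : ℝ) := le_trans (Int.le_ceil lam) (by exact_mod_cast h1)
    have h3 : lam = (⌊lam⌋ : ℝ) := le_antisymm h2 (Int.floor_le lam)
    have h4 : 0 ≤ ⌊lam⌋ := by positivity
    refine hni ⌊lam⌋.toNat ?_
    exact h3.trans (by exact_mod_cast congrArg (fun z : ℤ => (z : ℝ)) (Int.toNat_of_nonneg h4).symm)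

lemma fsig_one_of_le_ceil {lam : ℝ} (h0 : 0 < lam) (hni : ∀ z : ℕ, lam ≠ z) {k : ℤ}
    (hk0 : 0 ≤ k) (hk : k ≤ ⌈lam⌉) : fsig lam k = 1 := by
  have hc := ceil_eq_floor_add_one h0 hni
  have hc1 : 1 ≤ ⌈lam⌉ := by exact_mod_cast Int.ceil_pos.2 h0
  rw [fsig, if_neg (not_lt.2 hk0), if_neg (not_lt.2 h0.le)]
  by_cases h : k ≤ ⌊lam⌋
  · rw [if_pos h]
  · rw [if_neg h]
    have : k = ⌈lam⌉ := by omega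
    subst this
    have : (⌈lam⌉ + ⌈lam⌉).toNat = 2 * ⌈lam⌉.toNat := by omega
    rw [this, pow_mul]
    norm_num

lemma fsig_alt_of_ceil_le {lam : ℝ} (h0 : 0 < lam) (hni : ∀ z : ℕ, lam ≠ z) {k : ℤ}
    (hk : ⌈lam⌉ ≤ k) : fsig lam k = (-1) ^ (k + ⌈lam⌉).toNat := by
  have hc := ceil_eq_floor_add_one h0 hni
  have hc1 : 1 ≤ ⌈lam⌉ := by exact_mod_cast Int.ceil_pos.2 h0
  rw [fsig, if_neg (by omega), if_neg (not_lt.2 h0.le), if_neg (by omega)]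

lemma neg_one_pow_pm (t : ℕ) : ((-1 : ℤ)) ^ t = 1 ∨ ((-1 : ℤ)) ^ t = -1 := by
  rcases Nat.even_or_odd t with h | h
  · exact Or.inl h.neg_one_pow
  · exact Or.inr h.neg_one_pow

lemma fsig_pm (lam : ℝ) {k : ℤ} (hk : 0 ≤ k) : fsig lam k = 1 ∨ fsig lam k = -1 := by
  rw [fsig, if_neg (not_lt.2 hk)]
  split_ifs
  exacts [neg_one_pow_pm _, Or.inl rfl, neg_one_pow_pm _]

lemma split_sum (m : ℕ) (F : Fin (m + 1) → ℕ → ℤ) (k : ℕ) :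
    ∑ x ∈ Finset.Nat.antidiagonalTuple (m + 1) k, ∏ i, F i (x i)
      = ∑ p ∈ Finset.HasAntidiagonal.antidiagonal k, F (Fin.last m) p.1 *
          ∑ y ∈ Finset.Nat.antidiagonalTuple m p.2, ∏ i, F i.castSucc (y i) := by
  simp_rw [Finset.mul_sum]
  rw [Finset.sum_sigma']
  refine Finset.sum_nbij' (fun x => ⟨(x (Fin.last m), ∑ i : Fin m, x i.castSucc), Fin.init x⟩)
    (fun q => Fin.snoc q.2 q.1.1) ?_ ?_ ?_ ?_ ?_
  · intro x hx
    rw [Finset.Nat.mem_antidiagonalTuple] at hx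
    rw [Finset.mem_sigma, Finset.Nat.mem_antidiagonalTuple, Finset.HasAntidiagonal.mem_antidiagonal]
    constructor
    · rw [← hx, Fin.sum_univ_castSucc]; ring
    · simp [Fin.init]
  · intro q hq
    rw [Finset.mem_sigma, Finset.Nat.mem_antidiagonalTuple, Finset.HasAntidiagonal.mem_antidiagonal] at hq
    rw [Finset.Nat.mem_antidiagonalTuple, Fin.sum_univ_castSucc]
    simp only [Fin.snoc_castSucc, Fin.snoc_last]
    rw [hq.2]; omega
  · intro x _
    exact Fin.snoc_init_self x
  · intro q hq
    rw [Finset.mem_sigma, Finset.Nat.mem_antidiagonalTuple, Finset.HasAntidiagonal.mem_antidiagonal] at hq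
    obtain ⟨⟨a, b⟩, y⟩ := q
    simp only [Fin.snoc_last, Fin.init_snoc, Fin.snoc_castSucc]
    simp only at hq
    rw [hq.2]
  · intro x _
    rw [Fin.prod_univ_castSucc]
    simp only [Fin.init]
    ring

lemma card_adt (m : ℕ) : ∀ k : ℕ,
    (Finset.Nat.antidiagonalTuple (m + 1) k).card = (k + m).choose m := by
  induction m with
  | zero => intro k; rw [Finset.Nat.antidiagonalTuple_one]; simp
  | succ m ih =>
    intro k
    have h := split_sum (m + 1) (fun _ _ => (1 : ℤ)) k
    simp only [Finset.prod_const_one, Finset.sum_const, one_mul, nsmul_eq_mul, mul_one] at h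
    have h2 : ∀ p ∈ Finset.HasAntidiagonal.antidiagonal k,
        ((Finset.Nat.antidiagonalTuple (m + 1) p.2).card : ℤ) = ((p.2 + m).choose m : ℤ) := by
      intro p _; exact_mod_cast ih p.2
    rw [Finset.sum_congr rfl h2] at h
    have h3 : (∑ p ∈ Finset.HasAntidiagonal.antidiagonal k, ((p.2 + m).choose m : ℤ))
        = ((k + m + 1).choose (m + 1) : ℤ) := by
      rw [Finset.Nat.sum_antidiagonal_eq_sum_range_succ_mk]
      rw [← Nat.sum_range_add_choose k m]
      push_cast
      rw [← Finset.sum_range_reflect]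
      apply Finset.sum_congr rfl
      intro i hi
      rw [Finset.mem_range] at hi
      congr 2
      omega
    rw [h3] at h
    have : ((Finset.Nat.antidiagonalTuple (m + 1 + 1) k).card : ℤ)
        = ((k + (m + 1)).choose (m + 1) : ℤ) := by
      rw [h]; norm_num [show k + m + 1 = k + (m + 1) by ring]
    exact_mod_cast this

lemma abs_sum_lt_card {α : Type*} [DecidableEq α] (S : Finset α) (f : α → ℤ)
    (hpm : ∀ x ∈ S, f x = 1 ∨ f x = -1)
    {a b : α} (ha : a ∈ S) (hb : b ∈ S) (hab : a ≠ b) (hf : f a + f b = 0) :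
    |∑ x ∈ S, f x| < S.card := by
  have hsub : ({a, b} : Finset α) ⊆ S := by
    intro x hx
    rw [Finset.mem_insert, Finset.mem_singleton] at hx
    rcases hx with rfl | rfl <;> assumption
  have hsum : ∑ x ∈ S \ {a, b}, f x + ∑ x ∈ ({a, b} : Finset α), f x = ∑ x ∈ S, f x :=
    Finset.sum_sdiff hsub
  rw [Finset.sum_pair hab, hf, add_zero] at hsum
  rw [← hsum]
  have h1 : |∑ x ∈ S \ {a, b}, f x| ≤ ((S \ {a, b}).card : ℤ) := by
    calc |∑ x ∈ S \ {a, b}, f x| ≤ ∑ x ∈ S \ {a, b}, |f x| := Finset.abs_sum_le_sum_abs _ _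
    _ ≤ ∑ _x ∈ S \ {a, b}, 1 := Finset.sum_le_sum (fun x hx => by
        rcases hpm x (Finset.mem_sdiff.1 hx).1 with h | h <;> simp [h])
    _ = ((S \ {a, b}).card : ℤ) := by simp
  have h2 : (S \ {a, b}).card = S.card - 2 := by
    rw [Finset.card_sdiff_of_subset hsub, Finset.card_pair hab]
  have h3 : 2 ≤ S.card := by
    calc 2 = ({a, b} : Finset α).card := (Finset.card_pair hab).symm
    _ ≤ S.card := Finset.card_le_card hsub
  rw [h2] at h1
  refine lt_of_le_of_lt h1 ?_
  exact_mod_cast Nat.sub_lt (by omega) (by omega)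

lemma prod_pm {ι : Type*} (s : Finset ι) (g : ι → ℤ) (h : ∀ i ∈ s, g i = 1 ∨ g i = -1) :
    (∏ i ∈ s, g i) = 1 ∨ (∏ i ∈ s, g i) = -1 := by
  have habs : |∏ i ∈ s, g i| = 1 := by
    rw [Finset.abs_prod]
    apply Finset.prod_eq_one
    intro i hi
    rcases h i hi with h' | h' <;> simp [h']
  exact (abs_eq (by norm_num : (0:ℤ) ≤ 1)).1 habs

lemma Esig_eq_choose (m : ℕ) (mu : Fin (m + 1) → ℝ) (hpos : ∀ i, 0 < mu i)
    (hgen : ∀ (i : Fin (m + 1)) (z : ℕ), mu i ≠ z) (hmin : ∀ i, mu (Fin.last m) ≤ mu i)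
    (k : ℕ) (hk : (k : ℤ) ≤ ⌈mu (Fin.last m)⌉) :
    Esig (m + 1) mu k = ((k + m).choose m : ℤ) := by
  unfold Esig
  have hone : ∀ y ∈ Finset.Nat.antidiagonalTuple (m + 1) k,
      (∏ i, fsig (mu i) (y i)) = 1 := by
    intro y hy
    apply Finset.prod_eq_one
    intro i _
    have hyi : y i ≤ k := by
      rw [Finset.Nat.mem_antidiagonalTuple] at hy
      rw [← hy]
      exact Finset.single_le_sum (fun _ _ => Nat.zero_le _) (Finset.mem_univ i)
    refine fsig_one_of_le_ceil (hpos i) (hgen i) (by positivity) ?_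
    calc ((y i : ℕ) : ℤ) ≤ (k : ℤ) := by exact_mod_cast hyi
    _ ≤ ⌈mu (Fin.last m)⌉ := hk
    _ ≤ ⌈mu i⌉ := Int.ceil_le_ceil (hmin i)
  rw [Finset.sum_congr rfl hone, Finset.sum_const, nsmul_eq_mul, mul_one, card_adt m k]

lemma Esig_abs_lt (m : ℕ) (hm : 1 ≤ m) (mu : Fin (m + 1) → ℝ) (hpos : ∀ i, 0 < mu i)
    (hgen : ∀ (i : Fin (m + 1)) (z : ℕ), mu i ≠ z) (k : ℕ)
    (hk : ⌈mu (Fin.last m)⌉ < (k : ℤ)) :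
    |Esig (m + 1) mu k| < ((k + m).choose m : ℤ) := by
  unfold Esig
  set a := ⌈mu (Fin.last m)⌉ with haa
  have ha1 : 1 ≤ a := Int.ceil_pos.2 (hpos _)
  have hk1 : 1 ≤ k := by omega
  set cm : Fin (m + 1) := Fin.last m with hcm
  set cm2 : Fin (m + 1) := ⟨m - 1, by omega⟩ with hcm2
  have hcmne : cm2 ≠ cm := by
    refine Fin.ne_of_val_ne ?_
    rw [hcm, hcm2]
    show m - 1 ≠ m
    omega
  set T1 : Fin (m + 1) → ℕ := fun i => if i = cm then k else 0 with hT1def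
  set T2 : Fin (m + 1) → ℕ :=
    fun i => (if i = cm then k - 1 else 0) + (if i = cm2 then 1 else 0) with hT2def
  have hT1 : T1 ∈ Finset.Nat.antidiagonalTuple (m + 1) k := by
    rw [Finset.Nat.mem_antidiagonalTuple]
    rw [Finset.sum_eq_single cm (fun b _ hb => if_neg hb)
      (fun h => absurd (Finset.mem_univ _) h), if_pos rfl]
  have hT2 : T2 ∈ Finset.Nat.antidiagonalTuple (m + 1) k := by
    rw [Finset.Nat.mem_antidiagonalTuple]
    show ∑ i, ((if i = cm then k - 1 else 0) + (if i = cm2 then 1 else 0)) = k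
    rw [Finset.sum_add_distrib,
      Finset.sum_eq_single cm (fun b _ hb => if_neg hb)
        (fun h => absurd (Finset.mem_univ _) h),
      Finset.sum_eq_single cm2 (fun b _ hb => if_neg hb)
        (fun h => absurd (Finset.mem_univ _) h),
      if_pos rfl, if_pos rfl]
    omega
  have hT12 : T1 ≠ T2 := by
    intro h
    have h' := congrFun h cm
    show False
    rw [show T1 cm = k from if_pos rfl,
      show T2 cm = (k - 1) + 0 by rw [hT2def]; exact congrArg₂ _ (if_pos rfl) (if_neg hcmne.symm)]
      at h'
    omega
  have hzero : ∀ i : Fin (m + 1), fsig (mu i) ((0 : ℕ) : ℤ) = 1 := by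
    intro i
    refine fsig_one_of_le_ceil (hpos i) (hgen i) (by norm_num) ?_
    have := Int.ceil_pos.2 (hpos i)
    omega
  have hv1 : (∏ i, fsig (mu i) (T1 i)) = (-1) ^ ((k : ℤ) + a).toNat := by
    rw [Finset.prod_eq_single cm
      (fun b _ hb => by rw [show T1 b = 0 from if_neg hb]; exact hzero b)
      (fun h => absurd (Finset.mem_univ cm) h)]
    rw [show T1 cm = k from if_pos rfl,
      fsig_alt_of_ceil_le (hpos cm) (hgen cm) (le_of_lt hk)]
  have hv2 : (∏ i, fsig (mu i) (T2 i)) = (-1) ^ ((k : ℤ) - 1 + a).toNat := by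
    rw [Finset.prod_eq_single cm ?_ (fun h => absurd (Finset.mem_univ cm) h)]
    · rw [show T2 cm = (k - 1) + 0 by
        rw [hT2def]; exact congrArg₂ _ (if_pos rfl) (if_neg hcmne.symm), add_zero,
        fsig_alt_of_ceil_le (hpos cm) (hgen cm) (by push_cast; omega)]
      congr 2
      push_cast
      omega
    · intro b _ hb
      rw [show T2 b = 0 + (if b = cm2 then 1 else 0) by
        rw [hT2def]; exact congrArg₂ _ (if_neg hb) rfl, zero_add]
      by_cases hb2 : b = cm2
      · rw [if_pos hb2]
        refine fsig_one_of_le_ceil (hpos b) (hgen b) (by norm_num) ?_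
        have := Int.ceil_pos.2 (hpos b)
        omega
      · rw [if_neg hb2]
        exact hzero b
  have hopp : (∏ i, fsig (mu i) (T1 i)) + (∏ i, fsig (mu i) (T2 i)) = 0 := by
    rw [hv1, hv2, show ((k : ℤ) + a).toNat = ((k : ℤ) - 1 + a).toNat + 1 by omega, pow_succ]
    ring
  have hcard := card_adt m k
  have := abs_sum_lt_card (Finset.Nat.antidiagonalTuple (m + 1) k)
    (fun y => ∏ i, fsig (mu i) (y i))
    (fun y _ => prod_pm _ _ (fun i _ => fsig_pm _ (by positivity))) hT1 hT2 hT12 hopp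
  rw [hcard] at this
  exact_mod_cast this

end AuxStmt17

/-- Case 5(a) of Theorem 1.1: exactly one negative highest weight and
total weight `λ < 0`. The definite multiplicity spaces are exactly the positive definite
spaces of levels `0` through `⌈λ_{n−1}⌉`. -/
theorem stmt_17 (n : ℕ) (hn : 3 ≤ n) (lam : Fin n → ℝ) (hanti : Antitone lam)
    (hpos : ∀ i : Fin n, (i : ℕ) < n - 1 → 0 < lam i)
    (hneg : lam ⟨n - 1, by omega⟩ < 0)
    (hgen : ∀ (i : Fin n) (z : ℕ), lam i ≠ z)
    (hsum : (∑ i, lam i) < 0)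
    (d : ℕ → ℤ)
    (hd : ∀ k : ℕ, d k = convSig n lam k -
      ∑ m ∈ Finset.range k, d m * fsig ((∑ i, lam i) - 2 * m) ((k : ℤ) - m)) :
    ∀ k : ℕ,
      ((k : ℤ) ≤ ⌈lam ⟨n - 2, by omega⟩⌉ → d k = ((k + n - 2).choose (n - 2) : ℤ)) ∧
      (⌈lam ⟨n - 2, by omega⟩⌉ < (k : ℤ) → |d k| < ((k + n - 2).choose (n - 2) : ℤ)) := by
  obtain ⟨p, rfl⟩ : ∃ p, n = p + 3 := ⟨n - 3, by omega⟩
  have hlam_last : lam (Fin.last (p + 2)) < 0 := hneg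
  set mu : Fin (p + 2) → ℝ := fun i => lam i.castSucc with hmu
  have hmupos : ∀ i, 0 < mu i := fun i => hpos i.castSucc (by simpa using i.isLt)
  have hmugen : ∀ (i : Fin (p + 2)) (z : ℕ), mu i ≠ z := fun i => hgen i.castSucc
  have hmin : ∀ i : Fin (p + 1 + 1), mu (Fin.last (p + 1)) ≤ mu i := by
    intro i
    apply hanti
    rw [Fin.le_def]
    simp only [Fin.coe_castSucc, Fin.val_last]
    omega
  have hconv : ∀ k : ℕ, convSig (p + 3) lam k
      = ∑ j ∈ Finset.range (k + 1), Esig (p + 2) mu j * (-1) ^ (k - j) := by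
    intro k
    have h : convSig (p + 3) lam k
        = ∑ q ∈ Finset.HasAntidiagonal.antidiagonal k,
            fsig (lam (Fin.last (p + 2))) ((q.1 : ℕ) : ℤ) * Esig (p + 2) mu q.2 :=
      split_sum (p + 2) (fun i j => fsig (lam i) (j : ℤ)) k
    calc convSig (p + 3) lam k
        = ∑ q ∈ Finset.HasAntidiagonal.antidiagonal k,
            fsig (lam (Fin.last (p + 2))) ((q.1 : ℕ) : ℤ) * Esig (p + 2) mu q.2 := h
      _ = ∑ q ∈ Finset.HasAntidiagonal.antidiagonal k, (-1 : ℤ) ^ q.1 * Esig (p + 2) mu q.2 :=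
          Finset.sum_congr rfl (fun q _ => by
            rw [fsig_of_neg hlam_last (by positivity), Int.toNat_natCast])
      _ = ∑ i ∈ Finset.range (k + 1), (-1 : ℤ) ^ i * Esig (p + 2) mu (k - i) :=
          Finset.Nat.sum_antidiagonal_eq_sum_range_succ_mk _ k
      _ = ∑ j ∈ Finset.range (k + 1), Esig (p + 2) mu j * (-1) ^ (k - j) := by
          rw [← Finset.sum_range_reflect]
          exact Finset.sum_congr rfl (fun i hi => by
            rw [Finset.mem_range] at hi
            rw [show k + 1 - 1 - i = k - i by omega, show k - (k - i) = i by omega, mul_comm])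
  have hdE : ∀ k : ℕ, d k = Esig (p + 2) mu k := by
    intro k
    induction k using Nat.strong_induction_on with
    | _ k ih =>
      have hco : ∀ j ∈ Finset.range k,
          d j * fsig ((∑ i, lam i) - 2 * j) ((k : ℤ) - j)
            = Esig (p + 2) mu j * (-1) ^ (k - j) := by
        intro j hj
        rw [Finset.mem_range] at hj
        have hneg' : (∑ i, lam i) - 2 * j < 0 := by
          have h2j : (0 : ℝ) ≤ 2 * j := by positivity
          linarith
        rw [ih j hj, fsig_of_neg hneg' (by omega)]
        congr 2
        omega
      rw [hd k, hconv k, Finset.sum_range_succ, Nat.sub_self, pow_zero, mul_one,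
        Finset.sum_congr rfl hco]
      ring
  intro k
  have hch : (k + (p + 3) - 2).choose (p + 3 - 2) = (k + (p + 1)).choose (p + 1) := by
    rw [show k + (p + 3) - 2 = k + (p + 1) by omega]
    rfl
  constructor
  · intro hk
    rw [hdE k, hch]
    exact Esig_eq_choose (p + 1) mu hmupos hmugen hmin k hk
  · intro hk
    rw [hdE k, hch]
    exact Esig_abs_lt (p + 1) (by omega) mu hmupos hmugen k hk
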